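/- arXiv:1911.04345 — 12 statements merged into one kernel-verified Lean document; each statement's English description precedes it below -/
import Mathlib

section
/- Let C be a symmetric monoidal closed category with internal hom [−,−], and let i : D ⥤ C be a fully faithful functor admitting a left adjoint L, with adjunction unit η (a reflective localization). Then the following four conditions are equivalent: (1) for every object c of C and every object d of D, the unit map η at [c, i d], i.e. [c, i d] ⟶ i L [c, i d], is an isomorphism; (2) for every object c of C and every object d of D, the map [η_c, i d] : [i L c, i d] ⟶ [c, i d] induced by the unit is an isomorphism; (3) for all objects c, c' of C, the map L(η_c ⊗ id_{c'}) : L(c ⊗ c') ⟶ L(i L c ⊗ c') is an isomorphism; (4) for all objects c, c' of C, the map L(η_c ⊗ η_{c'}) : L(c ⊗ c') ⟶ L(i L c ⊗ i L c') is an isomorphism. -/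
open CategoryTheory MonoidalCategory

/-- Day's reflection theorem (1-categorical version): for a reflective localization
`L ⊣ i` (with `i` fully faithful) of a symmetric monoidal closed category `C`, the four
conditions on the interaction of the localization with the monoidal closed structure
are equivalent. -/
theorem day_reflection_tfae {C : Type*} [Category C] [MonoidalCategory C]
    [SymmetricCategory C] [MonoidalClosed C]
    {D : Type*} [Category D] (i : D ⥤ C) [i.Full] [i.Faithful]
    (L : C ⥤ D) (adj : L ⊣ i) :
    List.TFAE
      [ ∀ (c : C) (d : D), IsIso (adj.unit.app ((ihom c).obj (i.obj d))),
        ∀ (c : C) (d : D), IsIso ((MonoidalClosed.pre (adj.unit.app c)).app (i.obj d)),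
        ∀ (c c' : C), IsIso (L.map (adj.unit.app c ⊗ₘ 𝟙 c')),
        ∀ (c c' : C), IsIso (L.map (adj.unit.app c ⊗ₘ adj.unit.app c')) ] := by
  have := CategoryTheory.Monoidal.Reflective.isIso_tfae adj
  simp only [tensorHom_id] at *
  convert this using 4
  all_goals exact ⟨fun h c d => h d c, fun h c d => h d c⟩
end

section
/- Let C be a symmetric monoidal closed category and let i : D ⥤ C be a fully faithful functor with left adjoint L and adjunction unit η. Assume that for all objects c, c' of C the map L(η_c ⊗ id_{c'}) : L(c ⊗ c') ⟶ L(i L c ⊗ c') is an isomorphism. Then local equivalences are stable under tensoring: if f : c ⟶ c' is a morphism of C such that L f is an isomorphism, then for every object c'' of C the morphism L(f ⊗ id_{c''}) : L(c ⊗ c'') ⟶ L(c' ⊗ c'') is an isomorphism. -/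
open CategoryTheory MonoidalCategory

/-- If, for a reflective localization `L ⊣ i` of a symmetric monoidal closed category `C`,
the maps `L(η_c ⊗ id_{c'})` are all isomorphisms, then local equivalences are stable under
tensoring: if `L f` is an isomorphism, so is `L (f ⊗ id)`. -/
theorem local_equivalence_tensor_stable {C : Type*} [Category C] [MonoidalCategory C]
    [SymmetricCategory C] [MonoidalClosed C]
    {D : Type*} [Category D] (i : D ⥤ C) [i.Full] [i.Faithful]
    (L : C ⥤ D) (adj : L ⊣ i)
    (h : ∀ (c c' : C), IsIso (L.map (adj.unit.app c ⊗ₘ 𝟙 c')))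
    {c c' : C} (f : c ⟶ c') (hf : IsIso (L.map f)) (c'' : C) :
    IsIso (L.map (f ⊗ₘ 𝟙 c'')) := by
  have key : (f ⊗ₘ 𝟙 c'') ≫ (adj.unit.app c' ⊗ₘ 𝟙 c'') =
      (adj.unit.app c ⊗ₘ 𝟙 c'') ≫ (i.map (L.map f) ⊗ₘ 𝟙 c'') := by
    rw [tensorHom_comp_tensorHom, tensorHom_comp_tensorHom]
    simp
  haveI := h c c''
  haveI := h c' c''
  haveI : IsIso (i.map (L.map f)) := inferInstance
  haveI : IsIso (i.map (L.map f) ⊗ₘ 𝟙 c'') :=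
    (tensorIso (asIso (i.map (L.map f))) (Iso.refl c'')).isIso_hom
  have : IsIso (L.map (f ⊗ₘ 𝟙 c'') ≫ L.map (adj.unit.app c' ⊗ₘ 𝟙 c'')) := by
    rw [← L.map_comp, key, L.map_comp]
    infer_instance
  exact IsIso.of_isIso_comp_right _ (L.map (adj.unit.app c' ⊗ₘ 𝟙 c''))
end

section
/- Let C be a small category, let D, E, F be cocomplete categories, and let f : C ⥤ D, g : C ⥤ E, h : C ⥤ F be functors. Let Lan_h f : F ⥤ D, Lan_h g : F ⥤ E and Lan_g f : E ⥤ D denote pointwise left Kan extensions of f along h, of g along h, and of f along g, with structure (unit) natural transformations f ⟶ h ⋙ Lan_h f, g ⟶ h ⋙ Lan_h g (with components τ_c : g(c) ⟶ (Lan_h g)(h c)) and f ⟶ g ⋙ Lan_g f. Suppose that for every object c of C and every object x of F, the map Hom_F(h c, x) ⟶ Hom_E(g c, (Lan_h g) x) sending φ to ((Lan_h g)(φ)) ∘ τ_c is a bijection. Then the canonical natural transformation Lan_h f ⟶ Lan_h g ⋙ Lan_g f, induced by the universal property of Lan_h f from the composite f ⟶ g ⋙ Lan_g f ⟶ (h ⋙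 Lan_h g) ⋙ Lan_g f, is an isomorphism. -/
open CategoryTheory CategoryTheory.Limits

section Aux

variable {C : Type*} [SmallCategory C]
    {E F : Type*} [Category E] [Category F]
    (g : C ⥤ E) (h : C ⥤ F) (Lhg : F ⥤ E) (τ : g ⟶ h ⋙ Lhg)
    (hyp : ∀ (c : C) (x : F),
      Function.Bijective (fun φ : h.obj c ⟶ x => τ.app c ≫ Lhg.map φ))
    (x : F)

/-- The comparison functor between comma categories. -/
@[simps]
def lanCompAux : CostructuredArrow h x ⥤ CostructuredArrow g (Lhg.obj x) where
  obj p := CostructuredArrow.mk (τ.app p.left ≫ Lhg.map p.hom)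
  map {p q} u := CostructuredArrow.homMk u.left (by
    have := τ.naturality u.left
    dsimp at this ⊢
    rw [reassoc_of% this, ← Lhg.map_comp, CostructuredArrow.w u])

@[simp]
lemma lanCompAux_obj_left (p : CostructuredArrow h x) :
    ((lanCompAux g h Lhg τ x).obj p).left = p.left := rfl

@[simp]
lemma lanCompAux_obj_hom (p : CostructuredArrow h x) :
    ((lanCompAux g h Lhg τ x).obj p).hom = τ.app p.left ≫ Lhg.map p.hom := rfl

lemma lanCompAux_faithful : (lanCompAux g h Lhg τ x).Faithful where
  map_injective {p q} u v huv := by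
    ext
    have := congrArg CommaMorphism.left huv
    simp at this
    exact this

include hyp in
lemma lanCompAux_full : (lanCompAux g h Lhg τ x).Full where
  map_surjective {p q} u := by
    have hw : τ.app p.left ≫ Lhg.map (h.map u.left ≫ q.hom) =
        τ.app p.left ≫ Lhg.map p.hom := by
      have hn := τ.naturality u.left
      dsimp at hn
      have hu := CostructuredArrow.w u
      dsimp at hu ⊢
      erw [Lhg.map_comp, ← Category.assoc, ← hn, Category.assoc, hu]
    refine ⟨CostructuredArrow.homMk u.left ((hyp p.left x).1 hw), ?_⟩
    ext
    rfl

include hyp in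
lemma lanCompAux_essSurj : (lanCompAux g h Lhg τ x).EssSurj where
  mem_essImage q := by
    obtain ⟨φ, hφ⟩ := (hyp q.left x).2 q.hom
    exact ⟨CostructuredArrow.mk φ,
      ⟨CostructuredArrow.isoMk (Iso.refl _) (by simp; exact hφ.symm)⟩⟩

include hyp in
lemma lanCompAux_isEquivalence : (lanCompAux g h Lhg τ x).IsEquivalence := by
  have := lanCompAux_faithful g h Lhg τ x
  have := lanCompAux_full g h Lhg τ hyp x
  have := lanCompAux_essSurj g h Lhg τ hyp x
  exact { }

end Aux

/-- Composition of pointwise left Kan extensions: if for all `c : C` and `x : F` the map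
`Hom_F(h c, x) → Hom_E(g c, (Lan_h g) x)`, `φ ↦ τ_c ≫ (Lan_h g).map φ`, is a bijection,
then the canonical comparison `Lan_h f ⟶ Lan_h g ⋙ Lan_g f` is an isomorphism. -/
theorem lan_comp_isIso {C : Type*} [SmallCategory C]
    {D E F : Type*} [Category D] [Category E] [Category F]
    [HasColimits D] [HasColimits E]
    (f : C ⥤ D) (g : C ⥤ E) (h : C ⥤ F)
    (Lhf : F ⥤ D) (α : f ⟶ h ⋙ Lhf) [Lhf.IsLeftKanExtension α]
    (_hLhf : (Functor.LeftExtension.mk Lhf α).IsPointwiseLeftKanExtension)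
    (Lhg : F ⥤ E) (τ : g ⟶ h ⋙ Lhg) [Lhg.IsLeftKanExtension τ]
    (_hLhg : (Functor.LeftExtension.mk Lhg τ).IsPointwiseLeftKanExtension)
    (Lgf : E ⥤ D) (γ : f ⟶ g ⋙ Lgf) [Lgf.IsLeftKanExtension γ]
    (_hLgf : (Functor.LeftExtension.mk Lgf γ).IsPointwiseLeftKanExtension)
    (hyp : ∀ (c : C) (x : F),
      Function.Bijective (fun φ : h.obj c ⟶ x => τ.app c ≫ Lhg.map φ)) :
    IsIso (Lhf.descOfIsLeftKanExtension α (Lhg ⋙ Lgf)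
      (γ ≫ CategoryTheory.Functor.whiskerRight τ Lgf ≫ (Functor.associator h Lhg Lgf).hom)) := by
  set unit' : f ⟶ h ⋙ (Lhg ⋙ Lgf) :=
    γ ≫ CategoryTheory.Functor.whiskerRight τ Lgf ≫ (Functor.associator h Lhg Lgf).hom with hu
  have hpt : (Functor.LeftExtension.mk (Lhg ⋙ Lgf) unit').IsPointwiseLeftKanExtension := by
    intro x
    have hEq := lanCompAux_isEquivalence g h Lhg τ hyp x
    let e := (lanCompAux g h Lhg τ x).asEquivalence
    have hw := (_hLgf (Lhg.obj x)).whiskerEquivalence e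
    refine IsColimit.ofIsoColimit hw (Cocones.ext (Iso.refl _) ?_)
    intro p
    dsimp [e, unit', Functor.LeftExtension.coconeAt]
    change (γ.app p.left ≫ Lgf.map (τ.app p.left ≫ Lhg.map p.hom)) ≫ 𝟙 _ =
      (γ.app p.left ≫ Lgf.map (τ.app p.left) ≫ 𝟙 _) ≫ Lgf.map (Lhg.map p.hom)
    simp [Lgf.map_comp]
  have : (Lhg ⋙ Lgf).IsLeftKanExtension unit' := hpt.isLeftKanExtension
  exact (Functor.isLeftKanExtension_iff_isIso _ α unit'
    (Lhf.descOfIsLeftKanExtension_fac α _ _)).1 this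
end

section
/- Let C be a category with a zero object, zero morphisms, and binary biproducts (a semiadditive category), and let P be an object of C. Let π : Over P ⥤ C denote the forgetful functor from the over-category. Then whiskering with π gives a bijection π* from the set of natural transformations 𝟭_C ⟶ 𝟭_C to the set of natural transformations π ⟶ π. Its inverse sends a natural transformation H : π ⟶ π to the natural transformation of 𝟭_C whose component at an object c of C is the component of H at the object of Over P given by the zero morphism 0 : c ⟶ P. -/
open CategoryTheory CategoryTheory.Limits

/-- Whiskering a natural endomorphism of the identity functor with the forgetful functor
`π : Over P ⥤ C` gives a natural collection of endomorphisms over `P`. -/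
def whiskerOverForget {C : Type u} [Category.{v} C] [HasZeroMorphisms C] (P : C)
    (α : 𝟭 C ⟶ 𝟭 C) : Over.forget P ⟶ Over.forget P where
  app X := α.app X.left
  naturality X Y f := α.naturality f.left

/-- The candidate inverse: restrict a natural collection of endomorphisms over `P` to the
objects of `Over P` given by zero morphisms. -/
def natColToNatEnd {C : Type u} [Category.{v} C] [HasZeroMorphisms C] (P : C)
    (H : Over.forget P ⟶ Over.forget P) : 𝟭 C ⟶ 𝟭 C where
  app c := H.app (Over.mk (0 : c ⟶ P))
  naturality c c' f := H.naturality (Over.homMk f (by simp) :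
    Over.mk (0 : c ⟶ P) ⟶ Over.mk (0 : c' ⟶ P))

/-- For a semiadditive category `C` (zero morphisms and binary biproducts) and an object
`P`, whiskering with the forgetful functor `Over P ⥤ C` is a bijection from natural
endomorphisms of the identity functor to natural collections of endomorphisms over `P`,
with inverse given by restriction to zero morphisms. -/
theorem whiskerOverForget_bijective {C : Type u} [Category.{v} C] [HasZeroObject C]
    [HasZeroMorphisms C] [HasBinaryBiproducts C] (P : C) :
    Function.LeftInverse (natColToNatEnd P) (whiskerOverForget P) ∧
    Function.RightInverse (natColToNatEnd P) (whiskerOverForget P) := by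
  constructor
  · intro α
    ext c
    rfl
  · intro H
    ext X
    -- It suffices to show `H.app (Over.mk 0) = H.app X` where both live on `c := X.left`.
    show H.app (Over.mk (0 : X.left ⟶ P)) = H.app X
    set c := X.left with hc
    -- The auxiliary object over `P` given by the biproduct projection.
    let Z : Over P := Over.mk (biprod.snd : c ⊞ P ⟶ P)
    -- Three maps into `Z`.
    let u : X ⟶ Z := Over.homMk (biprod.lift (𝟙 c) X.hom) (by simp [Z])
    let v : Over.mk (0 : c ⟶ P) ⟶ Z := Over.homMk (biprod.inl : c ⟶ c ⊞ P) (by simp [Z])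
    let w : Over.mk (𝟙 P) ⟶ Z := Over.homMk (biprod.inr : P ⟶ c ⊞ P) (by simp [Z])
    have hu : H.app X ≫ biprod.lift (𝟙 c) X.hom =
        biprod.lift (𝟙 c) X.hom ≫ H.app Z := (H.naturality u).symm
    have hv : H.app (Over.mk (0 : c ⟶ P)) ≫ biprod.inl = biprod.inl ≫ H.app Z :=
      (H.naturality v).symm
    have hw : H.app (Over.mk (𝟙 P)) ≫ biprod.inr = biprod.inr ≫ H.app Z :=
      (H.naturality w).symm
    -- The key morphism.
    set g : c ⊞ P ⟶ c := H.app Z ≫ biprod.fst with hg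
    have hinr : biprod.inr ≫ g = 0 := by
      erw [hg, ← Category.assoc, ← hw, Category.assoc]
      simp
      exact comp_zero
    -- `g` factors through the first projection.
    have hfac : g = biprod.fst ≫ (biprod.inl ≫ g) := by
      apply biprod.hom_ext' <;> simp [hinr]
    have e0 : H.app (Over.mk (0 : c ⟶ P)) = biprod.inl ≫ g := by
      erw [hg, ← Category.assoc, ← hv, Category.assoc]; simp
      exact (Category.comp_id _).symm
    have eX : H.app X = biprod.lift (𝟙 c) X.hom ≫ g := by
      erw [hg, ← Category.assoc, ← hu, Category.assoc]; simp
      exact (Category.comp_id _).symm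
    rw [e0, eX, hfac]
    simp
end

section
/- For every natural transformation α : 𝟭 ⟶ 𝟭 of the identity functor on the category of abelian groups, there exists a unique integer n such that for every abelian group A and every a ∈ A, the component α_A satisfies α_A(a) = n • a. In other words, evaluation at the group ℤ (sending α to α_ℤ(1) ∈ ℤ) is a bijection from the set of natural endomorphisms of the identity functor of abelian groups to ℤ. -/
open CategoryTheory

lemma natEnd_key (α : 𝟭 AddCommGrpCat.{0} ⟶ 𝟭 AddCommGrpCat.{0}) (A : AddCommGrpCat.{0}) (a : A) :
    α.app A a = (show ℤ from α.app (AddCommGrpCat.of ℤ) (1 : ℤ)) • a := by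
  have h := α.naturality (show AddCommGrpCat.of ℤ ⟶ A from AddCommGrpCat.ofHom (zmultiplesHom A a))
  have h1 := ConcreteCategory.congr_hom h (1 : ℤ)
  simp only [Functor.id_obj, Functor.id_map] at h1
  have h2 : α.app A ((zmultiplesHom A a) (1 : ℤ)) =
      (zmultiplesHom A a) (α.app (AddCommGrpCat.of ℤ) (1 : ℤ)) := h1
  simpa using h2

/-- Every natural endomorphism of the identity functor of the category of abelian groups
is multiplication by a unique integer `n`; equivalently, evaluation at `ℤ` (sending `α` to
`α_ℤ(1)`) is a bijection from natural endomorphisms of the identity to `ℤ`. -/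
theorem natEnd_AddCommGrp_int :
    (∀ α : 𝟭 AddCommGrpCat.{0} ⟶ 𝟭 AddCommGrpCat.{0},
      ∃! n : ℤ, ∀ (A : AddCommGrpCat.{0}) (a : A), α.app A a = n • a) ∧
    Function.Bijective (fun α : 𝟭 AddCommGrpCat.{0} ⟶ 𝟭 AddCommGrpCat.{0} =>
      α.app (AddCommGrpCat.of ℤ) (1 : ℤ)) := by
  constructor
  · intro α
    refine ⟨α.app (AddCommGrpCat.of ℤ) (1 : ℤ), fun A a => natEnd_key α A a, ?_⟩
    intro n hn
    have := hn (AddCommGrpCat.of ℤ) (1 : ℤ)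
    simpa using this.symm
  · constructor
    · intro α β h
      ext A a
      rw [natEnd_key α A a, natEnd_key β A a]
      simp only at h
      rw [h]
    · intro n
      refine ⟨{ app := fun A => AddCommGrpCat.ofHom (zsmulAddGroupHom n), naturality := ?_ }, ?_⟩
      · intro A B f
        ext a
        show (f ≫ AddCommGrpCat.ofHom (zsmulAddGroupHom n)) a
          = (AddCommGrpCat.ofHom (zsmulAddGroupHom n) ≫ f) a
        simp [AddCommGrpCat.ofHom, zsmulAddGroupHom, map_zsmul]
      · simp [AddCommGrpCat.ofHom, zsmulAddGroupHom]
end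

section
/- Let P be an abelian group and let π : Over P ⥤ AddCommGrp be the forgetful functor from the over-category of the category of abelian groups over P. Then for every natural transformation H : π ⟶ π there exists a unique integer n such that for every object of Over P, i.e. every group homomorphism f : G → P, the component H_f : G → G is given by H_f(g) = n • g for all g ∈ G. -/
open CategoryTheory

section Aux

variable (P : AddCommGrpCat.{0}) (H : Over.forget P ⟶ Over.forget P)

/-- Elementwise naturality. -/
lemma natCol_aux_natur {X Y : Over P} (u : X ⟶ Y) (x : X.left) :
    H.app Y (u.left x) = u.left (H.app X x) := by
  have h := H.naturality u
  have := congrFun (congrArg (fun (m : X.left ⟶ Y.left) => (m : X.left → Y.left)) h) x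
  exact this

/-- The value `H.app (Over.mk q) 1` does not depend on `q : ℤ ⟶ P`. -/
lemma natCol_aux_const (q : AddCommGrpCat.of ℤ ⟶ P) :
    H.app (Over.mk q) (1 : ℤ) = H.app (Over.mk (0 : AddCommGrpCat.of ℤ ⟶ P)) (1 : ℤ) := by
  set Z2 : AddCommGrpCat.{0} := AddCommGrpCat.of (ℤ × ℤ)
  set q2 : Z2 ⟶ P := AddCommGrpCat.ofHom (q.hom.comp (AddMonoidHom.fst ℤ ℤ)) with hq2
  have h1 := natCol_aux_natur P H
    (Over.homMk (AddCommGrpCat.ofHom (AddMonoidHom.inl ℤ ℤ) : AddCommGrpCat.of ℤ ⟶ Z2) (by ext x; simp [hq2]; rfl) :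
      Over.mk q ⟶ Over.mk q2) (1 : ℤ)
  have h2 := natCol_aux_natur P H
    (Over.homMk (AddCommGrpCat.ofHom (AddMonoidHom.inr ℤ ℤ) : AddCommGrpCat.of ℤ ⟶ Z2) (by ext x; simp [hq2]; exact map_zero _) :
      Over.mk (0 : AddCommGrpCat.of ℤ ⟶ P) ⟶ Over.mk q2) (1 : ℤ)
  have hd := natCol_aux_natur P H
    (Over.homMk (AddCommGrpCat.ofHom ((AddMonoidHom.id ℤ).prod (AddMonoidHom.id ℤ)) : AddCommGrpCat.of ℤ ⟶ Z2)
      (by ext x; simp [hq2]; rfl) : Over.mk q ⟶ Over.mk q2) (1 : ℤ)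
  simp only [Over.homMk_left] at h1 h2 hd
  have hsum : ((1, 1) : ℤ × ℤ) = ((1, 0) : ℤ × ℤ) + (0, 1) := by simp
  have hadd : H.app (Over.mk q2) ((1, 1) : ℤ × ℤ) =
      H.app (Over.mk q2) ((1, 0) : ℤ × ℤ) + H.app (Over.mk q2) ((0, 1) : ℤ × ℤ) := by
    rw [hsum]; exact map_add _ _ _
  have e1 : H.app (Over.mk q2) ((1, 0) : ℤ × ℤ) = (H.app (Over.mk q) (1 : ℤ), 0) := by
    exact h1
  have e2 : H.app (Over.mk q2) ((0, 1) : ℤ × ℤ) =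
      (0, H.app (Over.mk (0 : AddCommGrpCat.of ℤ ⟶ P)) (1 : ℤ)) := by
    exact h2
  have ed : H.app (Over.mk q2) ((1, 1) : ℤ × ℤ) =
      (H.app (Over.mk q) (1 : ℤ), H.app (Over.mk q) (1 : ℤ)) := by
    exact hd
  rw [ed, e1, e2] at hadd
  have h3 := congrArg Prod.snd hadd
  have h4 : (show ℤ from H.app (Over.mk q) (1 : ℤ)) =
      (0 : ℤ) + (show ℤ from H.app (Over.mk (0 : AddCommGrpCat.of ℤ ⟶ P)) (1 : ℤ)) := h3
  simpa using h4

end Aux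

/-- Every natural collection of endomorphisms over an abelian group `P` (natural
transformation of the forgetful functor `Over P ⥤ AddCommGrp`) is given on each object
`f : G ⟶ P` of `Over P` by multiplication by a unique integer `n`. -/
theorem natCol_over_AddCommGrp_int (P : AddCommGrpCat.{0})
    (H : Over.forget P ⟶ Over.forget P) :
    ∃! n : ℤ, ∀ (G : AddCommGrpCat.{0}) (f : G ⟶ P) (g : G),
      H.app (Over.mk f) g = n • g := by
  refine ⟨H.app (Over.mk (0 : AddCommGrpCat.of ℤ ⟶ P)) (1 : ℤ), ?_, ?_⟩
  · intro G f g
    set q : AddCommGrpCat.of ℤ ⟶ P := AddCommGrpCat.ofHom (f.hom.comp (zmultiplesHom G g)) with hq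
    have h := natCol_aux_natur P H
      (Over.homMk (AddCommGrpCat.ofHom (zmultiplesHom G g) : AddCommGrpCat.of ℤ ⟶ G) (by ext x; simp [hq]) :
        Over.mk q ⟶ Over.mk f) (1 : ℤ)
    simp only [Over.homMk_left] at h
    rw [natCol_aux_const P H q] at h
    simp at h
    exact h
  · intro n hn
    have := hn (AddCommGrpCat.of ℤ) (0 : AddCommGrpCat.of ℤ ⟶ P) (1 : ℤ)
    simpa using this.symm
end

section
/- Let P be an abelian group, let f : G → P be a group homomorphism which is non-torsion, meaning that for every integer n > 0 the homomorphism g ↦ f(n • g) is not the zero homomorphism. Let π : Over P ⥤ AddCommGrp be the forgetful functor and let H : π ⟶ π be a natural transformation such that f ∘ H_f = 0, where H_f : G → G is the component of H at the object f of Over P. Then H_f = 0. -/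
open CategoryTheory

private lemma natApply_aux {P : AddCommGrpCat.{0}} (H : Over.forget P ⟶ Over.forget P)
    {X Y : Over P} (u : X ⟶ Y) (x : X.left) :
    H.app Y (u.left x) = u.left (H.app X x) := by
  have hnat := H.naturality u
  have := congrArg (fun (k : (X.left : AddCommGrpCat) ⟶ Y.left) => k x) hnat
  exact this

/-- If `f : G ⟶ P` is a non-torsion homomorphism of abelian groups (for every `n > 0` the
map `g ↦ f (n • g)` is not the zero homomorphism), and `H` is a natural collection of
endomorphisms over `P` such that `f ∘ H_f = 0`, then `H_f = 0`. -/
theorem natCol_nonTorsion_trivial (P G : AddCommGrpCat.{0}) (f : G ⟶ P)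
    (hf : ∀ n : ℤ, 0 < n → ∃ g : G, f (n • g) ≠ 0)
    (H : Over.forget P ⟶ Over.forget P)
    (hH : H.app (Over.mk f) ≫ f = 0) :
    H.app (Over.mk f) = 0 := by
  classical
  -- the ℤ-object over P determined by p : P
  let α : ↥P → (AddCommGrpCat.of ℤ ⟶ P) := fun p => AddCommGrpCat.ofHom (zmultiplesHom ↥P p)
  let A : ↥P → Over P := fun p => Over.mk (α p)
  let e : ∀ _ : ↥P, (AddCommGrpCat.of ℤ ⟶ AddCommGrpCat.of ℤ) := fun p => H.app (A p)
  -- the integer by which H acts on the ℤ-object over p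
  let c : ↥P → ℤ := fun p => e p (1 : ℤ)
  -- step 1: E g = c (f g) • g, via the morphism ℤ → G, n ↦ n • g
  have step1 : ∀ g : ↥G, H.app (Over.mk f) g = c (f g) • g := by
    intro g
    have hw : AddCommGrpCat.ofHom (zmultiplesHom ↥G g) ≫ f = α (f g) := by
      apply AddCommGrpCat.int_hom_ext
      show f ((1:ℤ) • g) = (1:ℤ) • (f g)
      rw [map_zsmul]
    let u : A (f g) ⟶ Over.mk f := Over.homMk (AddCommGrpCat.ofHom (zmultiplesHom ↥G g)) hw
    have hnat := natApply_aux H u (1:ℤ)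
    have h1 : (u.left : AddCommGrpCat.of ℤ ⟶ G) (1:ℤ) = g := by
      show (1:ℤ) • g = g; rw [one_zsmul]
    have h2 : (u.left : AddCommGrpCat.of ℤ ⟶ G) (c (f g)) = c (f g) • g := rfl
    have h3 : H.app (A (f g)) (1:ℤ) = c (f g) := rfl
    rw [h1, h3, h2] at hnat
    exact hnat
  -- step 2: c is constant, via the ℤ×ℤ-objects
  have step2 : ∀ p q : ↥P, c p = c q := by
    intro p q
    let β : AddCommGrpCat.of (ℤ × ℤ) ⟶ P :=
      AddCommGrpCat.ofHom ((zmultiplesHom ↥P p).coprod (zmultiplesHom ↥P q))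
    let B : Over P := Over.mk β
    let eB : AddCommGrpCat.of (ℤ × ℤ) ⟶ AddCommGrpCat.of (ℤ × ℤ) := H.app B
    have key : ∀ (r : ↥P) (j : ℤ →+ ℤ × ℤ),
        (((zmultiplesHom ↥P p).coprod (zmultiplesHom ↥P q)).comp j) 1 = r →
        eB (j 1) = j (c r) := by
      intro r j hj
      have hw : AddCommGrpCat.ofHom j ≫ β = α r := by
        apply AddCommGrpCat.int_hom_ext
        show (((zmultiplesHom ↥P p).coprod (zmultiplesHom ↥P q)).comp j) 1 = (1:ℤ) • r
        rw [hj, one_zsmul]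
      let u : A r ⟶ B := Over.homMk (AddCommGrpCat.ofHom j) hw
      have hnat := natApply_aux H u (1:ℤ)
      exact hnat
    have h10 : eB ((1:ℤ), (0:ℤ)) = ((c p), (0:ℤ)) := by
      have := key p (AddMonoidHom.inl ℤ ℤ) (by simp)
      simpa using this
    have h01 : eB ((0:ℤ), (1:ℤ)) = ((0:ℤ), (c q)) := by
      have := key q (AddMonoidHom.inr ℤ ℤ) (by simp)
      simpa using this
    have h11 : eB ((1:ℤ), (1:ℤ)) = ((c (p + q)), (c (p + q))) := by
      have := key (p + q) ((AddMonoidHom.id ℤ).prod (AddMonoidHom.id ℤ)) (by simp)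
      simpa using this
    have hsum : eB ((1:ℤ), (1:ℤ)) = ((c p), (c q)) := by
      have h : ((1:ℤ), (1:ℤ)) = ((1:ℤ), (0:ℤ)) + ((0:ℤ), (1:ℤ)) := by simp
      rw [h, map_add, h10, h01, Prod.mk_add_mk, add_zero, zero_add]
    have heq := hsum.symm.trans h11
    have h1 := congrArg Prod.fst heq
    have h2 := congrArg Prod.snd heq
    simp only at h1 h2
    rw [h1, ← h2]
  -- step 3: conclude c = 0 using non-torsion
  have hc0 : ∀ p : ↥P, c p = 0 := by
    intro p
    by_contra hne
    set n : ℤ := c p with hn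
    have hzero : ∀ g : ↥G, f (n • g) = 0 := by
      intro g
      have h1 : f (H.app (Over.mk f) g) = 0 := by
        have := congrArg (fun (k : ((Over.mk f).left : AddCommGrpCat) ⟶ P) => k g) hH
        exact this
      rw [step1 g, step2 (f g) p] at h1
      exact h1
    rcases lt_or_gt_of_ne hne with hlt | hgt
    · obtain ⟨g, hg⟩ := hf (-n) (by omega)
      exact hg (by rw [neg_smul, map_neg, hzero g, neg_zero])
    · obtain ⟨g, hg⟩ := hf n hgt
      exact hg (hzero g)
  ext g
  rw [step1 g, hc0 (f g)]
  exact zero_smul ℤ (g : G)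
end

section
/- Let K be a field and let A be a nontrivial commutative K-algebra. If the K-algebra homomorphism A → A ⊗[K] A given by a ↦ a ⊗ 1 (the left inclusion into the tensor product) is surjective, then the structure map K → A is surjective; equivalently, the rank of A as a K-module is at most 1. -/
open scoped TensorProduct

/-- If `A` is a nontrivial commutative algebra over a field `K` and the left inclusion
`A → A ⊗[K] A`, `a ↦ a ⊗ 1`, is surjective, then the structure map `K → A` is surjective;
equivalently, the rank of `A` as a `K`-module is at most `1`. -/
theorem solid_algebra_over_field {K A : Type*} [Field K] [CommRing A] [Algebra K A]
    [Nontrivial A]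
    (h : Function.Surjective
      (Algebra.TensorProduct.includeLeft : A →ₐ[K] A ⊗[K] A)) :
    Function.Surjective (algebraMap K A) ∧ Module.rank K A ≤ 1 := by
  -- find a dual vector φ with φ 1 = 1
  obtain ⟨φ₀, hφ₀⟩ : ∃ φ : Module.Dual K A, φ 1 ≠ 0 := by
    by_contra hc
    push_neg at hc
    exact one_ne_zero ((Module.forall_dual_apply_eq_zero_iff K (1 : A)).mp hc)
  set φ : Module.Dual K A := (φ₀ 1)⁻¹ • φ₀ with hφ
  have hφ1 : φ 1 = 1 := by simp [hφ, inv_mul_cancel₀ hφ₀]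
  -- the map φ ⊗ id : A ⊗ A → A
  let F : A ⊗[K] A →ₗ[K] A :=
    TensorProduct.lift
      { toFun := fun a => φ a • (LinearMap.id : A →ₗ[K] A)
        map_add' := by intro a b; simp [add_smul]
        map_smul' := by intro c a; simp [mul_smul] }
  have key : Function.Surjective (algebraMap K A) := by
    intro x
    obtain ⟨a, ha⟩ := h ((1 : A) ⊗ₜ[K] x)
    have : F (a ⊗ₜ[K] 1) = F (1 ⊗ₜ[K] x) := by rw [← ha]; rfl
    simp only [F, TensorProduct.lift.tmul, LinearMap.coe_mk, AddHom.coe_mk,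
      LinearMap.smul_apply, LinearMap.id_apply, hφ1, one_smul] at this
    exact ⟨φ a, by rw [Algebra.algebraMap_eq_smul_one]; exact this⟩
  refine ⟨key, rank_le_one_iff.mpr ⟨1, fun v => ?_⟩⟩
  obtain ⟨c, hc⟩ := key v
  exact ⟨c, by rw [← hc, Algebra.algebraMap_eq_smul_one]⟩
end

section
/- Let C be a cocomplete category and let f : c ⟶ d be a morphism of C. Let (X, x₀) and (Y, y₀) be pointed types. If f satisfies X-base change and f satisfies Y-base change, then f satisfies (X × Y)-base change, where X × Y is pointed at (x₀, y₀). -/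
open CategoryTheory CategoryTheory.Limits

/-- A morphism `f : c ⟶ d` in a cocomplete category satisfies `X`-base change, for a
pointed type `(X, x₀)`, if the square with sides `f`, the basepoint coproduct inclusions
`c ⟶ X • c` and `d ⟶ X • d`, and the induced map `X • c ⟶ X • d`, is a pushout. -/
def SatisfiesBaseChange {C : Type u} [Category.{v} C] [HasColimitsOfSize.{w, w} C]
    {c d : C} (f : c ⟶ d) (X : Type w) (x₀ : X) : Prop :=
  IsPushout f (Sigma.ι (fun _ : X => c) x₀) (Sigma.ι (fun _ : X => d) x₀)
    (Limits.Sigma.map (fun _ : X => f))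

/-- The square comparing the `X`-indexed coproduct of copies of `f` with the
`(X × Y)`-indexed one, via the inclusions at `y₀` in the second coordinate, is a pushout
whenever `f` satisfies `Y`-base change: it is an `X`-indexed coproduct of copies of the
`Y`-base change square. -/
lemma aux_pushout_baseChange {C : Type u} [Category.{v} C] [HasColimitsOfSize.{w, w} C]
    {c d : C} (f : c ⟶ d) (X Y : Type w) (y₀ : Y)
    (hY : SatisfiesBaseChange f Y y₀) :
    IsPushout (Limits.Sigma.map (fun _ : X => f))
      (Sigma.desc (fun x => Sigma.ι (fun _ : X × Y => c) (x, y₀)))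
      (Sigma.desc (fun x => Sigma.ι (fun _ : X × Y => d) (x, y₀)))
      (Limits.Sigma.map (fun _ : X × Y => f)) := by
  have sq : CommSq (Limits.Sigma.map (fun _ : X => f))
      (Sigma.desc (fun x => Sigma.ι (fun _ : X × Y => c) (x, y₀)))
      (Sigma.desc (fun x => Sigma.ι (fun _ : X × Y => d) (x, y₀)))
      (Limits.Sigma.map (fun _ : X × Y => f)) := by
    constructor
    ext x
    simp
  have cond : ∀ (s : PushoutCocone (Limits.Sigma.map (fun _ : X => f))
      (Sigma.desc (fun x => Sigma.ι (fun _ : X × Y => c) (x, y₀)))) (x : X),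
      f ≫ (Sigma.ι (fun _ : X => d) x ≫ s.inl) =
      Sigma.ι (fun _ : Y => c) y₀ ≫
        Sigma.desc (fun y => Sigma.ι (fun _ : X × Y => c) (x, y) ≫ s.inr) := by
    intro s x
    have h := Sigma.ι (fun _ : X => c) x ≫= s.condition
    simp only [ι_colimMap_assoc, Sigma.ι_map_assoc, Discrete.functor_obj, Discrete.natTrans_app,
      colimit.ι_desc_assoc, Cofan.mk_pt, Cofan.mk_ι_app, colimit.ι_desc] at h ⊢
    exact h
  refine IsPushout.of_isColimit' sq (PushoutCocone.IsColimit.mk _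
    (fun s => Sigma.desc (fun p => Sigma.ι (fun _ : Y => d) p.2 ≫ hY.desc
      (Sigma.ι (fun _ : X => d) p.1 ≫ s.inl)
      (Sigma.desc (fun y => Sigma.ι (fun _ : X × Y => c) (p.1, y) ≫ s.inr))
      (cond s p.1))) ?_ ?_ ?_)
  · intro s
    ext x
    simp [hY.inl_desc _ _ (cond s x)]
  · intro s
    ext ⟨x, y⟩
    have h2 := Sigma.ι (fun _ : Y => c) y ≫= hY.inr_desc
      (Sigma.ι (fun _ : X => d) x ≫ s.inl)
      (Sigma.desc (fun y => Sigma.ι (fun _ : X × Y => c) (x, y) ≫ s.inr))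
      (cond s x)
    simp only [ι_colimMap_assoc, Sigma.ι_map_assoc, Discrete.functor_obj, Discrete.natTrans_app,
      colimit.ι_desc, Cofan.mk_pt, Cofan.mk_ι_app] at h2 ⊢
    rw [h2]
  · intro s m h1 h2
    ext ⟨x, y⟩
    simp only [colimit.ι_desc, Cofan.mk_pt, Cofan.mk_ι_app]
    have key : Sigma.desc (fun y => Sigma.ι (fun _ : X × Y => d) (x, y) ≫ m) =
        hY.desc (Sigma.ι (fun _ : X => d) x ≫ s.inl)
          (Sigma.desc (fun y => Sigma.ι (fun _ : X × Y => c) (x, y) ≫ s.inr))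
          (cond s x) := by
      apply hY.hom_ext
      · rw [hY.inl_desc]
        have := Sigma.ι (fun _ : X => d) x ≫= h1
        simp only [colimit.ι_desc_assoc, Cofan.mk_pt, Cofan.mk_ι_app, colimit.ι_desc] at this ⊢
        exact this
      · rw [hY.inr_desc]
        ext y'
        have := Sigma.ι (fun _ : X × Y => c) (x, y') ≫= h2
        simp only [ι_colimMap_assoc, Sigma.ι_map_assoc, Discrete.functor_obj, Discrete.natTrans_app,
          colimit.ι_desc, Cofan.mk_pt, Cofan.mk_ι_app] at this ⊢
        exact this
    calc Sigma.ι (fun _ : X × Y => d) (x, y) ≫ m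
        = Sigma.ι (fun _ : Y => d) y ≫
          Sigma.desc (fun y => Sigma.ι (fun _ : X × Y => d) (x, y) ≫ m) := by
            rw [Sigma.ι_desc]
      _ = _ := by rw [key]

/-- If `f` satisfies `X`-base change and `Y`-base change, then it satisfies
`(X × Y)`-base change. -/
theorem satisfiesBaseChange_prod {C : Type u} [Category.{v} C]
    [HasColimitsOfSize.{w, w} C] {c d : C} (f : c ⟶ d)
    (X Y : Type w) (x₀ : X) (y₀ : Y)
    (hX : SatisfiesBaseChange f X x₀) (hY : SatisfiesBaseChange f Y y₀) :
    SatisfiesBaseChange f (X × Y) (x₀, y₀) := by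
  have hP := hX.paste_vert (aux_pushout_baseChange f X Y y₀ hY)
  have e1 : Sigma.ι (fun _ : X => c) x₀ ≫
      Sigma.desc (fun x => Sigma.ι (fun _ : X × Y => c) (x, y₀)) =
      Sigma.ι (fun _ : X × Y => c) (x₀, y₀) := Sigma.ι_desc _ _
  have e2 : Sigma.ι (fun _ : X => d) x₀ ≫
      Sigma.desc (fun x => Sigma.ι (fun _ : X × Y => d) (x, y₀)) =
      Sigma.ι (fun _ : X × Y => d) (x₀, y₀) := Sigma.ι_desc _ _
  rw [e1, e2] at hP
  exact hP
end

section
/- Let C be a cocomplete category and let f : c ⟶ d be a morphism of C. Let I be a small category, let F : I ⥤ Pointed be a diagram of pointed types, and let (Z, z₀) be a pointed type equipped with a colimit cocone exhibiting it as the colimit of F in the category Pointed of pointed types. If f satisfies F(i)-base change for every object i of I, then f satisfies (Z, z₀)-base change. -/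
open CategoryTheory CategoryTheory.Limits

theorem sigma_ι_comp_map {C : Type u} [Category.{v} C] [HasColimitsOfSize.{w, w} C]
    {c d : C} (f : c ⟶ d) {X : Type w} (z : X) :
    Sigma.ι (fun _ : X => c) z ≫ Limits.Sigma.map (fun _ : X => f)
      = f ≫ Sigma.ι (fun _ : X => d) z := by
  simp

/-- From `X`-base change, a unique-lifting property: pointed families of maps `c ⟶ e`
lift uniquely to pointed families of maps `d ⟶ e`. -/
theorem SatisfiesBaseChange.existsUnique {C : Type u} [Category.{v} C]
    [HasColimitsOfSize.{w, w} C] {c d : C} {f : c ⟶ d} {X : Type w} {x₀ : X}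
    (hbc : SatisfiesBaseChange f X x₀) {e : C} (v : d ⟶ e) (u : X → (c ⟶ e))
    (hu : u x₀ = f ≫ v) :
    ∃! wmap : X → (d ⟶ e), wmap x₀ = v ∧ ∀ z : X, f ≫ wmap z = u z := by
  have hcond : f ≫ v = Sigma.ι (fun _ : X => c) x₀ ≫ Sigma.desc u := by
    rw [Sigma.ι_desc, hu]
  refine ⟨fun z => Sigma.ι (fun _ : X => d) z ≫ hbc.desc v (Sigma.desc u) hcond, ⟨?_, ?_⟩, ?_⟩
  · exact hbc.inl_desc v (Sigma.desc u) hcond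
  · intro z
    show f ≫ Sigma.ι (fun _ : X => d) z ≫ hbc.desc v (Sigma.desc u) hcond = u z
    rw [← Category.assoc, ← sigma_ι_comp_map, Category.assoc, hbc.inr_desc, Sigma.ι_desc]
  · rintro w' ⟨hw'0, hw'⟩
    have key : Sigma.desc w' = hbc.desc v (Sigma.desc u) hcond := by
      apply hbc.hom_ext
      · rw [Sigma.ι_desc, hbc.inl_desc, hw'0]
      · apply Sigma.hom_ext
        intro z
        have l1 : Sigma.ι (fun _ : X => c) z ≫ Limits.Sigma.map (fun _ : X => f) ≫
            Sigma.desc w' = u z := by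
          rw [← Category.assoc, sigma_ι_comp_map, Category.assoc, Sigma.ι_desc, hw']
        have l2 : Sigma.ι (fun _ : X => c) z ≫ Limits.Sigma.map (fun _ : X => f) ≫
            hbc.desc v (Sigma.desc u) hcond = u z := by
          rw [hbc.inr_desc, Sigma.ι_desc]
        exact l1.trans l2.symm
    funext z
    rw [← key, Sigma.ι_desc]

/-- Conversely, the unique-lifting property implies `X`-base change. -/
theorem satisfiesBaseChange_of_existsUnique {C : Type u} [Category.{v} C]
    [HasColimitsOfSize.{w, w} C] {c d : C} {f : c ⟶ d} {X : Type w} {x₀ : X}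
    (H : ∀ (e : C) (v : d ⟶ e) (u : X → (c ⟶ e)), u x₀ = f ≫ v →
      ∃! wmap : X → (d ⟶ e), wmap x₀ = v ∧ ∀ z : X, f ≫ wmap z = u z) :
    SatisfiesBaseChange f X x₀ := by
  have sq : f ≫ Sigma.ι (fun _ : X => d) x₀
      = Sigma.ι (fun _ : X => c) x₀ ≫ Limits.Sigma.map (fun _ : X => f) := by
    rw [sigma_ι_comp_map]
  have hs : ∀ s : PushoutCocone f (Sigma.ι (fun _ : X => c) x₀),
      (fun z => Sigma.ι (fun _ : X => c) z ≫ s.inr) x₀ = f ≫ s.inl := fun s => s.condition.symm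
  apply IsPushout.of_isColimit (c := PushoutCocone.mk _ _ sq)
  apply PushoutCocone.IsColimit.mk sq
    (fun s => Sigma.desc
      (H s.pt s.inl (fun z => Sigma.ι (fun _ : X => c) z ≫ s.inr) (hs s)).choose)
  · intro s
    rw [Sigma.ι_desc,
      (H s.pt s.inl (fun z => Sigma.ι (fun _ : X => c) z ≫ s.inr) (hs s)).choose_spec.1.1]
  · intro s
    apply Sigma.hom_ext
    intro z
    rw [← Category.assoc, sigma_ι_comp_map, Category.assoc, Sigma.ι_desc,
      (H s.pt s.inl (fun z => Sigma.ι (fun _ : X => c) z ≫ s.inr) (hs s)).choose_spec.1.2]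
  · intro s m hm1 hm2
    have hm : (fun z => Sigma.ι (fun _ : X => d) z ≫ m)
        = (H s.pt s.inl (fun z => Sigma.ι (fun _ : X => c) z ≫ s.inr) (hs s)).choose := by
      apply (H s.pt s.inl (fun z => Sigma.ι (fun _ : X => c) z ≫ s.inr) (hs s)).choose_spec.2
      refine ⟨hm1, fun z => ?_⟩
      show f ≫ Sigma.ι (fun _ : X => d) z ≫ m = Sigma.ι (fun _ : X => c) z ≫ s.inr
      rw [← Category.assoc, ← sigma_ι_comp_map, Category.assoc, hm2]
    apply Sigma.hom_ext
    intro z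
    rw [Sigma.ι_desc]
    exact congrFun hm z

/-- Every element of a colimit of pointed types is either the basepoint or in the image
of one of the structure maps. -/
theorem pointed_colimit_jointly_surjective {I : Type w} [SmallCategory I]
    (F : I ⥤ Pointed.{w}) (co : Cocone F) (hco : IsColimit co) (z : co.pt.X) :
    z = co.pt.point ∨ ∃ (i : I) (x : (F.obj i).X), (co.ι.app i).toFun x = z := by
  let A : Set co.pt.X := {z | z = co.pt.point ∨ ∃ i x, (co.ι.app i).toFun x = z}
  let AP : Pointed.{w} := ⟨A, ⟨co.pt.point, Or.inl rfl⟩⟩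
  let ca : Cocone F :=
    { pt := AP
      ι :=
        { app := fun i => ⟨fun x => ⟨(co.ι.app i).toFun x, Or.inr ⟨i, x, rfl⟩⟩,
            Subtype.ext (co.ι.app i).map_point⟩
          naturality := fun i j m => by
            apply Pointed.Hom.ext
            funext x
            apply Subtype.ext
            exact congrFun (congrArg Pointed.Hom.toFun (co.w m)) x } }
  let s := hco.desc ca
  let incl : AP ⟶ co.pt := ⟨Subtype.val, rfl⟩
  have h1 : ∀ j, co.ι.app j ≫ (s ≫ incl) = co.ι.app j := by
    intro j
    rw [← Category.assoc, hco.fac ca j]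
    apply Pointed.Hom.ext
    funext x
    rfl
  have h2 : ∀ j, co.ι.app j ≫ 𝟙 co.pt = co.ι.app j := fun j => Category.comp_id _
  have hid : s ≫ incl = 𝟙 co.pt :=
    (hco.uniq co (s ≫ incl) h1).trans (hco.uniq co (𝟙 co.pt) h2).symm
  have hz : (incl.toFun (s.toFun z)) = z := congrFun (congrArg Pointed.Hom.toFun hid) z
  have hmem := (s.toFun z).2
  rwa [show ((s.toFun z) : co.pt.X) = z from hz] at hmem

/-- If `f` satisfies `F(i)`-base change for every object `i` of a small diagram
`F : I ⥤ Pointed` of pointed types, then `f` satisfies base change with respect to any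
colimit of `F` in the category of pointed types. -/
theorem satisfiesBaseChange_colimit {C : Type u} [Category.{v} C]
    [HasColimitsOfSize.{w, w} C] {c d : C} (f : c ⟶ d)
    {I : Type w} [SmallCategory I] (F : I ⥤ Pointed.{w})
    (co : Cocone F) (hco : IsColimit co)
    (h : ∀ i : I, SatisfiesBaseChange f (F.obj i).X (F.obj i).point) :
    SatisfiesBaseChange f co.pt.X co.pt.point := by
  apply satisfiesBaseChange_of_existsUnique
  intro e v u hu
  -- for each i, lift the restricted family along `f` using base change for `F.obj i`
  have Hi : ∀ i : I, ∃! wmap : (F.obj i).X → (d ⟶ e),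
      wmap (F.obj i).point = v ∧ ∀ z, f ≫ wmap z = u ((co.ι.app i).toFun z) := by
    intro i
    apply (h i).existsUnique v (fun z => u ((co.ι.app i).toFun z))
    show u ((co.ι.app i).toFun (F.obj i).point) = f ≫ v
    rw [(co.ι.app i).map_point]
    exact hu
  -- a small pointed type recording the values of the lifts
  let T : Type w := Option (Σ i : I, (F.obj i).X)
  let val : T → (d ⟶ e) := fun t => Option.rec v (fun p => (Hi p.1).choose p.2) t
  let r : T → T → Prop := fun a b => val a = val b
  let val' : Quot r → (d ⟶ e) := Quot.lift val (fun _ _ hab => hab)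
  let D : Pointed.{w} := ⟨Quot r, Quot.mk r none⟩
  -- the lifts assemble into a cocone over `F` with vertex `D`
  have hnat : ∀ {i j : I} (m : i ⟶ j) (x : (F.obj i).X),
      (Hi j).choose ((F.map m).toFun x) = (Hi i).choose x := by
    intro i j m x
    have key : (fun x => (Hi j).choose ((F.map m).toFun x)) = (Hi i).choose := by
      apply (Hi i).choose_spec.2
      constructor
      · show (Hi j).choose ((F.map m).toFun (F.obj i).point) = v
        rw [(F.map m).map_point]
        exact (Hi j).choose_spec.1.1
      · intro z
        show f ≫ (Hi j).choose ((F.map m).toFun z) = u ((co.ι.app i).toFun z)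
        rw [(Hi j).choose_spec.1.2]
        congr 1
        exact congrFun (congrArg Pointed.Hom.toFun (co.w m)) z
    exact congrFun key x
  let coc : Cocone F :=
    { pt := D
      ι :=
        { app := fun i => ⟨fun x => Quot.mk r (some ⟨i, x⟩),
            Quot.sound ((Hi i).choose_spec.1.1 : val (some ⟨i, (F.obj i).point⟩) = val none)⟩
          naturality := fun i j m => by
            apply Pointed.Hom.ext
            funext x
            exact Quot.sound (hnat m x : val (some ⟨j, _⟩) = val (some ⟨i, x⟩)) } }
  let W := hco.desc coc
  have hWfac : ∀ (i : I) (x : (F.obj i).X),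
      W.toFun ((co.ι.app i).toFun x) = Quot.mk r (some ⟨i, x⟩) := fun i x =>
    congrFun (congrArg Pointed.Hom.toFun (hco.fac coc i)) x
  have hW0 : val' (W.toFun co.pt.point) = v := by
    rw [W.map_point]
  refine ⟨fun z => val' (W.toFun z), ⟨hW0, ?_⟩, ?_⟩
  · intro z
    show f ≫ val' (W.toFun z) = u z
    rcases pointed_colimit_jointly_surjective F co hco z with hz | ⟨i, x, hz⟩
    · rw [hz, hW0, ← hu]
    · rw [← hz, hWfac i x]
      exact (Hi i).choose_spec.1.2 x
  · rintro w' ⟨hw'0, hw'⟩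
    funext z
    show w' z = val' (W.toFun z)
    rcases pointed_colimit_jointly_surjective F co hco z with hz | ⟨i, x, hz⟩
    · rw [hz, hw'0, hW0]
    · have key : (fun x => w' ((co.ι.app i).toFun x)) = (Hi i).choose := by
        apply (Hi i).choose_spec.2
        constructor
        · show w' ((co.ι.app i).toFun (F.obj i).point) = v
          rw [(co.ι.app i).map_point]
          exact hw'0
        · exact fun z => hw' _
      rw [← hz, hWfac i x]
      exact congrFun key x
end

section
/- Let C be a cocomplete category and let f : c ⟶ d be a morphism of C. Let S⁰ denote the pointed type with two elements (Bool, pointed at false). If f satisfies S⁰-base change (equivalently, if the induced morphism c ⊔ d ⟶ d ⊔ d, given by f on the first summand and the identity on the second summand, is an isomorphism), then f satisfies X-base change for every pointed type (X, x₀). -/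
open CategoryTheory CategoryTheory.Limits

/-- The key extracted content of `S⁰`-base change: whenever `Hom(d, T)` is inhabited,
precomposition with `f` is a bijection `Hom(d, T) ≃ Hom(c, T)`. -/
lemma key_extension {C : Type u} [Category.{v} C] [HasColimitsOfSize.{0, 0} C]
    {c d : C} (f : c ⟶ d) (h : SatisfiesBaseChange f Bool false)
    {T : C} (g : d ⟶ T) (u : c ⟶ T) : ∃! m : d ⟶ T, f ≫ m = u := by
  have hιc : ∀ b : Bool, (Sigma.ι (fun _ : Bool => c) b ≫ Limits.Sigma.map (fun _ : Bool => f) : _)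
      = f ≫ Sigma.ι (fun _ : Bool => d) b := by intro b; simp
  -- the cocone encoding the pair (g, u)
  set k : (∐ fun _ : Bool => c) ⟶ T :=
    Sigma.desc (fun b => if b then u else f ≫ g) with hk
  have w : f ≫ g = Sigma.ι (fun _ : Bool => c) false ≫ k := by simp [hk]
  refine ⟨Sigma.ι (fun _ : Bool => d) true ≫ h.desc g k w, ?_, ?_⟩
  · -- existence
    show f ≫ (Sigma.ι (fun _ : Bool => d) true ≫ h.desc g k w) = u
    rw [← Category.assoc, ← hιc true, Category.assoc, h.inr_desc]
    simp [hk]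
  · -- uniqueness
    intro m hm
    have h1 : Sigma.desc (fun b : Bool => if b then m else g) = h.desc g k w := by
      apply h.hom_ext
      · rw [h.inl_desc]; simp
      · rw [h.inr_desc]
        apply Sigma.hom_ext
        intro b
        rw [← Category.assoc, hιc b, Category.assoc]
        cases b <;> simp [hk, hm]
    calc m = Sigma.ι (fun _ : Bool => d) true ≫
          Sigma.desc (fun b : Bool => if b then m else g) := by simp
      _ = Sigma.ι (fun _ : Bool => d) true ≫ h.desc g k w := by rw [h1]

/-- If `f` satisfies `S⁰`-base change, where `S⁰` is the two-element type `Bool` pointed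
at `false`, then `f` satisfies `X`-base change for every pointed type `(X, x₀)`. -/
theorem satisfiesBaseChange_of_sphereZero {C : Type u} [Category.{v} C]
    [HasColimitsOfSize.{0, 0} C] [HasColimitsOfSize.{w, w} C] {c d : C} (f : c ⟶ d)
    (h : SatisfiesBaseChange f Bool false) (X : Type w) (x₀ : X) :
    SatisfiesBaseChange f X x₀ := by
  have hιc : ∀ x : X, (Sigma.ι (fun _ : X => c) x ≫ Limits.Sigma.map (fun _ : X => f) : _)
      = f ≫ Sigma.ι (fun _ : X => d) x := by intro x; simp
  have comm : f ≫ Sigma.ι (fun _ : X => d) x₀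
      = Sigma.ι (fun _ : X => c) x₀ ≫ Limits.Sigma.map (fun _ : X => f) := (hιc x₀).symm
  refine IsPushout.of_isColimit' ⟨comm⟩ ?_
  refine PushoutCocone.IsColimit.mk _ (fun s =>
      Sigma.desc (fun x => (key_extension f h s.inl (Sigma.ι (fun _ : X => c) x ≫ s.inr)).choose))
    ?_ ?_ ?_
  · -- inl fac : ι x₀ ≫ desc = s.inl
    intro s
    dsimp only
    rw [Sigma.ι_desc]
    exact ((key_extension f h s.inl
      (Sigma.ι (fun _ : X => c) x₀ ≫ s.inr)).choose_spec.2 s.inl s.condition).symm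
  · -- inr fac
    intro s
    dsimp only
    apply Sigma.hom_ext
    intro x
    rw [← Category.assoc, hιc x, Category.assoc, Sigma.ι_desc]
    exact (key_extension f h s.inl (Sigma.ι (fun _ : X => c) x ≫ s.inr)).choose_spec.1
  · -- uniqueness
    intro s m hm1 hm2
    dsimp only
    apply Sigma.hom_ext
    intro x
    rw [Sigma.ι_desc]
    have hx : f ≫ (Sigma.ι (fun _ : X => d) x ≫ m) = Sigma.ι (fun _ : X => c) x ≫ s.inr := by
      rw [← Category.assoc, ← hιc x, Category.assoc, hm2]
    exact (key_extension f h s.inl (Sigma.ι (fun _ : X => c) x ≫ s.inr)).choose_spec.2 _ hx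
end

section
/- Let I be a small category and let F : I ⥤ Pointed be a diagram of pointed types. Let U : Pointed ⥤ Type be the forgetful functor. Let T be the colimit in Type of U ∘ F, let S be the colimit in Type of the constant functor on I with value PUnit, let s : S → T be the map induced by the natural transformation const PUnit ⟶ U ∘ F whose components pick out the basepoints, and let t : S → PUnit be the unique map. Let Q be the pushout in Type of t : S → PUnit and s : S → T. Then Q, pointed at the image of the point of PUnit and equipped with the cocone induced by the canonical maps U(F i) → T → Q, is a colimit of F in the category Pointed of pointed types. -/
open CategoryTheory CategoryTheory.Limits

universe u

variable {I : Type u} [SmallCategory I] (F : I ⥤ Pointed.{u})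

/-- The colimit in `Type` of the underlying types of a diagram of pointed types. -/
noncomputable def underlyingColimit : Type u := colimit (F ⋙ forget Pointed)

/-- The colimit in `Type` of the constant diagram with value `PUnit`. -/
noncomputable def basepointsColimit : Type u :=
  colimit ((Functor.const I).obj (PUnit : Type u))

/-- The natural transformation from the constant diagram `PUnit` to the underlying diagram
whose components pick out the basepoints. -/
def basepointTrans : (Functor.const I).obj (PUnit : Type u) ⟶ F ⋙ forget Pointed where
  app i := TypeCat.ofHom fun _ => (F.obj i).point
  naturality i j f := by
    ext u
    exact ((F.map f).map_point).symm

/-- The induced map on colimits from the colimit of basepoints to the colimit of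
underlying types. -/
noncomputable def basepointsMap : basepointsColimit (I := I) ⟶ underlyingColimit F :=
  colimMap (basepointTrans F)

/-- The unique map from the colimit of basepoints to `PUnit`. -/
def collapseMap : basepointsColimit (I := I) ⟶ (PUnit : Type u) := TypeCat.ofHom fun _ => PUnit.unit

/-- The pushout in `Type` of the collapse map along the basepoints map. -/
noncomputable def pointedColimitCarrier : Type u :=
  pushout (collapseMap (I := I)) (basepointsMap F)

/-- The basepoint of the pushout: the image of the point of `PUnit`. -/
noncomputable def pointedColimitPoint : pointedColimitCarrier F :=
  pushout.inl (collapseMap (I := I)) (basepointsMap F) PUnit.unit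

/-- The cocone on `F` with apex the pushout, with structure maps the canonical maps
`U (F i) ⟶ T ⟶ Q`. -/
noncomputable def pointedColimitCocone : Cocone F where
  pt := ⟨pointedColimitCarrier F, pointedColimitPoint F⟩
  ι :=
    { app := fun i =>
        { toFun := fun x =>
            pushout.inr (collapseMap (I := I)) (basepointsMap F)
              (colimit.ι (F ⋙ forget Pointed) i x)
          map_point := by
            have h1 := types_congr_hom (ι_colimMap (basepointTrans F) i) PUnit.unit
            have h2 := types_congr_hom
              (pushout.condition (f := collapseMap (I := I)) (g := basepointsMap F))
              (colimit.ι ((Functor.const I).obj (PUnit : Type u)) i PUnit.unit)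
            dsimp [basepointsMap, basepointTrans] at h1 ⊢
            rw [← h1]
            exact h2.symm }
      naturality := by
        intro i j f
        apply Pointed.Hom.ext
        funext x
        have hw := types_congr_hom (colimit.w (F ⋙ forget Pointed) f) x
        simp only [Pointed.Hom.comp_toFun', Function.comp_apply]
        exact congrArg (fun y => pushout.inr (collapseMap (I := I)) (basepointsMap F) y) hw }

/-- The map on underlying colimits induced by a cocone. -/
noncomputable def descFun (c : Cocone F) : underlyingColimit F ⟶ c.pt.X :=
  colimit.desc (F ⋙ forget Pointed) ((forget Pointed).mapCocone c)

lemma desc_comm (c : Cocone F) :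
    collapseMap (I := I) ≫ (TypeCat.ofHom (fun _ => c.pt.point) : (PUnit : Type u) ⟶ c.pt.X) =
      basepointsMap F ≫ descFun F c := by
  apply colimit.hom_ext
  intro i
  ext u
  have h1 := types_congr_hom (ι_colimMap (basepointTrans F) i) u
  have h2 := types_congr_hom (colimit.ι_desc ((forget Pointed).mapCocone c) i) ((F.obj i).point)
  show c.pt.point = descFun F c (basepointsMap F (colimit.ι ((Functor.const I).obj (PUnit : Type u)) i u))
  rw [show basepointsMap F (colimit.ι ((Functor.const I).obj (PUnit : Type u)) i u) =
      colimit.ι (F ⋙ forget Pointed) i ((F.obj i).point) from h1]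
  exact ((c.ι.app i).map_point.symm).trans h2.symm

/-- Colimits of diagrams of pointed types are computed as the pushout of the colimit of
underlying types along the collapse of the colimit of basepoints: the cocone above is a
colimit cocone. -/
theorem pointedColimitCocone_isColimit : Nonempty (IsColimit (pointedColimitCocone F)) := by
  constructor
  refine
    { desc := fun c =>
        { toFun := pushout.desc (TypeCat.ofHom fun _ => c.pt.point) (descFun F c) (desc_comm F c)
          map_point := ?_ }
      fac := ?_
      uniq := ?_ }
  · exact types_congr_hom (pushout.inl_desc (TypeCat.ofHom fun _ => c.pt.point) (descFun F c) (desc_comm F c))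
      PUnit.unit
  · intro c i
    apply Pointed.Hom.ext
    funext x
    show pushout.desc (TypeCat.ofHom fun _ => c.pt.point) (descFun F c) (desc_comm F c)
      (pushout.inr (collapseMap (I := I)) (basepointsMap F)
        (colimit.ι (F ⋙ forget Pointed) i x)) = (c.ι.app i).toFun x
    exact (types_congr_hom (pushout.inr_desc (TypeCat.ofHom fun _ => c.pt.point) (descFun F c) (desc_comm F c))
      (colimit.ι (F ⋙ forget Pointed) i x)).trans
      (types_congr_hom (colimit.ι_desc ((forget Pointed).mapCocone c) i) x)
  · intro c m hm
    apply Pointed.Hom.ext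
    suffices h : (TypeCat.ofHom m.toFun : pointedColimitCarrier F ⟶ c.pt.X) =
        pushout.desc (TypeCat.ofHom fun _ => c.pt.point) (descFun F c) (desc_comm F c) from
      congrArg (fun (g : pointedColimitCarrier F ⟶ c.pt.X) => ⇑(ConcreteCategory.hom g)) h
    apply pushout.hom_ext (f := collapseMap (I := I)) (g := basepointsMap F)
    · ext u
      cases u
      show m.toFun (pointedColimitCocone F).pt.point = _
      rw [m.map_point]
      exact (types_congr_hom (pushout.inl_desc (TypeCat.ofHom fun _ => c.pt.point) (descFun F c)
        (desc_comm F c)) PUnit.unit).symm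
    · apply colimit.hom_ext
      intro i
      ext x
      show m.toFun (pushout.inr (collapseMap (I := I)) (basepointsMap F)
        (colimit.ι (F ⋙ forget Pointed) i x)) = _
      have := congrFun (congrArg Pointed.Hom.toFun (hm i)) x
      refine this.trans ?_
      exact ((types_congr_hom (pushout.inr_desc (TypeCat.ofHom fun _ => c.pt.point) (descFun F c) (desc_comm F c))
        (colimit.ι (F ⋙ forget Pointed) i x)).trans
        (types_congr_hom (colimit.ι_desc ((forget Pointed).mapCocone c) i) x)).symm
end
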